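/- Let Δ' ≥ 0 and μ > 0 be real, let B ≥ 1 be an integer, and let T_1, …, T_B be independent, identically distributed real random variables, each with the shifted-exponential distribution SExp(Δ', μ). Let M = max(T_1, …, T_B). Then the coefficient of variations of M satisfies √(Var[M]) / E[M] = √(H_{B,2}) / (Δ'μ + H_{B,1}). In particular, with Δ' = NΔ/B this gives CoV[T] = √(H_{B,2}) / (NΔμ/B + H_{B,1}). -/

import Mathlib

open MeasureTheory ProbabilityTheory Finset
open Real Filter Set


variable {μ : ℝ}

/-- derivative lemma -/
lemma hd1 (hμ : 0 < μ) (k : ℕ) (t : ℝ) :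
    HasDerivAt (fun t : ℝ => (1 - Real.exp (-μ * t)) ^ (k+1) / (((k:ℝ)+1) * μ))
      (Real.exp (-μ * t) * (1 - Real.exp (-μ * t)) ^ k) t := by
  have h1 : HasDerivAt (fun t : ℝ => -μ * t) (-μ) t := by
    simpa using (hasDerivAt_id t).const_mul (-μ)
  have h2 := h1.exp
  have h3 : HasDerivAt (fun t : ℝ => 1 - Real.exp (-μ * t)) (μ * Real.exp (-μ * t)) t := by
    have := h2.const_sub 1
    exact this.congr_deriv (by ring)
  have h4 := (h3.pow (k+1)).div_const (((k:ℝ)+1) * μ)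
  refine h4.congr_deriv ?_
  have hk : ((k:ℝ)+1) ≠ 0 := by positivity
  push_cast
  field_simp

lemma exp_le_one_of (hμ : 0 < μ) {t : ℝ} (ht : 0 ≤ t) : Real.exp (-μ * t) ≤ 1 := by
  apply Real.exp_le_one_iff.mpr; nlinarith

lemma tendsto_exp_neg_mul (hμ : 0 < μ) :
    Tendsto (fun t : ℝ => Real.exp (-μ * t)) atTop (nhds 0) := by
  have : Tendsto (fun t : ℝ => μ * t) atTop atTop :=
    Tendsto.const_mul_atTop hμ tendsto_id
  have := (Real.tendsto_exp_neg_atTop_nhds_zero).comp this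
  simpa [Function.comp_def, neg_mul] using this

lemma tendsto_F (hμ : 0 < μ) (k : ℕ) :
    Tendsto (fun t : ℝ => (1 - Real.exp (-μ * t)) ^ (k+1) / (((k:ℝ)+1) * μ)) atTop
      (nhds (1 / (((k:ℝ)+1) * μ))) := by
  have h := tendsto_exp_neg_mul hμ
  have : Tendsto (fun t : ℝ => (1 - Real.exp (-μ * t)) ^ (k+1)) atTop (nhds 1) := by
    have := ((tendsto_const_nhds : Tendsto (fun _ : ℝ => (1:ℝ)) atTop (nhds 1)).sub h).pow (k+1)
    simpa using this
  simpa using this.div_const (((k:ℝ)+1) * μ)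

lemma int_ck (hμ : 0 < μ) (k : ℕ) :
    IntegrableOn (fun t : ℝ => Real.exp (-μ * t) * (1 - Real.exp (-μ * t)) ^ k) (Ioi 0) ∧
    ∫ t in Ioi 0, Real.exp (-μ * t) * (1 - Real.exp (-μ * t)) ^ k = 1 / (((k:ℝ)+1) * μ) := by
  have hderiv : ∀ x ∈ Ici (0:ℝ), HasDerivAt
      (fun t : ℝ => (1 - Real.exp (-μ * t)) ^ (k+1) / (((k:ℝ)+1) * μ))
      (Real.exp (-μ * x) * (1 - Real.exp (-μ * x)) ^ k) x := fun x _ => hd1 hμ k x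
  have hpos : ∀ x ∈ Ioi (0:ℝ), 0 ≤ Real.exp (-μ * x) * (1 - Real.exp (-μ * x)) ^ k := by
    intro x hx
    have h1 := exp_le_one_of hμ (le_of_lt hx.out)
    have h2 : (0:ℝ) ≤ 1 - Real.exp (-μ * x) := by linarith
    positivity
  have htend := tendsto_F hμ k
  refine ⟨integrableOn_Ioi_deriv_of_nonneg' hderiv hpos htend, ?_⟩
  rw [integral_Ioi_of_hasDerivAt_of_nonneg (hderiv 0 self_mem_Ici).continuousAt.continuousWithinAt
    (fun x hx => hderiv x (Set.Ioi_subset_Ici_self hx)) hpos htend]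
  simp

noncomputable def Hsum (n : ℕ) : ℝ := ∑ k ∈ Finset.range n, 1 / ((k:ℝ)+1)

lemma hpt (n : ℕ) (t : ℝ) :
    1 - (1 - Real.exp (-μ * t)) ^ n
      = ∑ k ∈ Finset.range n, Real.exp (-μ * t) * (1 - Real.exp (-μ * t)) ^ k := by
  have h := geom_sum_mul (1 - Real.exp (-μ * t)) n
  have e1 : ∑ k ∈ Finset.range n, Real.exp (-μ * t) * (1 - Real.exp (-μ * t)) ^ k
      = ((∑ k ∈ Finset.range n, (1 - Real.exp (-μ * t)) ^ k) *
        ((1 - Real.exp (-μ * t)) - 1)) * (-1) := by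
    rw [Finset.sum_mul, Finset.sum_mul]
    apply Finset.sum_congr rfl; intros; ring
  rw [e1, h]; ring

lemma int_rho (hμ : 0 < μ) (n : ℕ) :
    IntegrableOn (fun t : ℝ => 1 - (1 - Real.exp (-μ * t)) ^ n) (Ioi 0) ∧
    ∫ t in Ioi 0, (1 - (1 - Real.exp (-μ * t)) ^ n) = Hsum n / μ := by
  have hfun : (fun t : ℝ => 1 - (1 - Real.exp (-μ * t)) ^ n)
      = fun t => ∑ k ∈ Finset.range n, Real.exp (-μ * t) * (1 - Real.exp (-μ * t)) ^ k := by
    funext t; exact hpt n t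
  constructor
  · rw [hfun]
    exact integrable_finset_sum _ (fun k _ => (int_ck hμ k).1)
  · rw [hfun, integral_finset_sum _ (fun k _ => (int_ck hμ k).1)]
    rw [Hsum, Finset.sum_div]
    apply Finset.sum_congr rfl
    intro k _
    rw [(int_ck hμ k).2]
    have : ((k:ℝ)+1) ≠ 0 := by positivity
    field_simp

lemma tendsto_t_exp (hμ : 0 < μ) :
    Tendsto (fun t : ℝ => t * Real.exp (-μ * t)) atTop (nhds 0) := by
  have hmt : Tendsto (fun t : ℝ => μ * t) atTop atTop :=
    Tendsto.const_mul_atTop hμ tendsto_id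
  have h := (tendsto_pow_mul_exp_neg_atTop_nhds_zero 1).comp hmt
  have h2 := h.const_mul (1/μ)
  rw [mul_zero] at h2
  apply h2.congr
  intro t
  have : μ ≠ 0 := ne_of_gt hμ
  simp only [Function.comp_apply, pow_one, neg_mul]
  field_simp

lemma int_t_exp (hμ : 0 < μ) :
    IntegrableOn (fun t : ℝ => t * Real.exp (-μ * t)) (Ioi 0) := by
  have hderiv : ∀ x ∈ Ici (0:ℝ), HasDerivAt
      (fun t : ℝ => -(t/μ + 1/μ^2) * Real.exp (-μ * t)) (x * Real.exp (-μ * x)) x := by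
    intro x _
    have h1 : HasDerivAt (fun t : ℝ => -μ * t) (-μ) x := by
      simpa using (hasDerivAt_id x).const_mul (-μ)
    have h2 := h1.exp
    have h3 : HasDerivAt (fun t : ℝ => -(t/μ + 1/μ^2)) (-(1/μ)) x := by
      have := ((hasDerivAt_id x).div_const μ).add_const (1/μ^2)
      exact this.neg.congr_deriv (by ring)
    have h4 := h3.mul h2
    have : μ ≠ 0 := ne_of_gt hμ
    exact h4.congr_deriv (by field_simp; ring)
  have hpos : ∀ x ∈ Ioi (0:ℝ), 0 ≤ x * Real.exp (-μ * x) := by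
    intro x hx; have : (0:ℝ) < x := hx; positivity
  have htend : Tendsto (fun t : ℝ => -(t/μ + 1/μ^2) * Real.exp (-μ * t)) atTop (nhds 0) := by
    have h1 := (tendsto_t_exp hμ).const_mul (-(1/μ))
    have h2 := (tendsto_exp_neg_mul hμ).const_mul (-(1/μ^2))
    rw [mul_zero] at h1 h2
    have := h1.add h2
    rw [add_zero] at this
    apply this.congr
    intro t; ring
  exact integrableOn_Ioi_deriv_of_nonneg' hderiv hpos htend

lemma cont_ck (k : ℕ) : Continuous (fun t : ℝ =>
    t * (Real.exp (-μ * t) * (1 - Real.exp (-μ * t)) ^ k)) := by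
  fun_prop

lemma int_t_ck_integrable (hμ : 0 < μ) (k : ℕ) :
    IntegrableOn (fun t : ℝ => t * (Real.exp (-μ * t) * (1 - Real.exp (-μ * t)) ^ k))
      (Ioi 0) := by
  apply Integrable.mono' (int_t_exp hμ) (cont_ck k).aestronglyMeasurable
  filter_upwards [ae_restrict_mem measurableSet_Ioi] with t ht
  have ht0 : (0:ℝ) < t := ht
  have he1 : Real.exp (-μ * t) ≤ 1 := exp_le_one_of hμ ht0.le
  have he0 : (0:ℝ) ≤ 1 - Real.exp (-μ * t) := by linarith
  have hu1 : (1 - Real.exp (-μ * t)) ^ k ≤ 1 := pow_le_one₀ he0 (by nlinarith [Real.exp_pos (-μ * t)])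
  rw [Real.norm_eq_abs, abs_of_nonneg (by positivity)]
  have hE : (0:ℝ) ≤ Real.exp (-μ * t) := (Real.exp_pos _).le
  calc t * (Real.exp (-μ * t) * (1 - Real.exp (-μ * t)) ^ k)
      ≤ t * (Real.exp (-μ * t) * 1) := by
        apply mul_le_mul_of_nonneg_left _ ht0.le
        exact mul_le_mul_of_nonneg_left hu1 hE
    _ = t * Real.exp (-μ * t) := by ring

lemma one_sub_pow_le (k : ℕ) {e : ℝ} (he0 : 0 ≤ e) (he1 : e ≤ 1) :
    1 - (1 - e) ^ (k+1) ≤ ((k:ℝ)+1) * e := by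
  have h := one_add_mul_le_pow (a := -e) (by linarith) (k+1)
  have : 1 + ((k:ℝ)+1) * (-e) ≤ (1 - e)^(k+1) := by
    refine le_of_le_of_eq (le_of_eq_of_le ?_ h) ?_ <;> push_cast <;> ring
  linarith

lemma int_t_ck (hμ : 0 < μ) (k : ℕ) :
    ∫ t in Ioi 0, t * (Real.exp (-μ * t) * (1 - Real.exp (-μ * t)) ^ k)
      = Hsum (k+1) / (((k:ℝ)+1) * μ^2) := by
  have hk0 : ((k:ℝ)+1) ≠ 0 := by positivity
  have hμ0 : μ ≠ 0 := ne_of_gt hμ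
  set c : ℝ := ((k:ℝ)+1) * μ with hc
  have hc0 : c ≠ 0 := by positivity
  set g1 : ℝ → ℝ := fun t => ((1 - Real.exp (-μ * t)) ^ (k+1) - 1) / c with hg1
  set g2 : ℝ → ℝ := fun t => t * (Real.exp (-μ * t) * (1 - Real.exp (-μ * t)) ^ k) with hg2
  set f : ℝ → ℝ := fun t => t * g1 t with hf
  have hd1' : ∀ x : ℝ, HasDerivAt g1 (Real.exp (-μ * x) * (1 - Real.exp (-μ * x)) ^ k) x := by
    intro x
    have h := (hd1 hμ k x).sub_const (1/c)
    rw [← hc] at h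
    have heq : (fun t : ℝ => (1 - Real.exp (-μ * t)) ^ (k+1) / c - 1/c) = g1 := by
      funext t; rw [hg1]; ring
    rwa [heq] at h
  have hderiv : ∀ x ∈ Ici (0:ℝ), HasDerivAt f (g1 x + g2 x) x := by
    intro x _
    have h := (hasDerivAt_id x).mul (hd1' x)
    exact h.congr_deriv (by simp [hg1, hg2])
  have hg1int : IntegrableOn g1 (Ioi 0) := by
    have h : IntegrableOn (fun t : ℝ => -((1 - (1 - Real.exp (-μ * t)) ^ (k+1)) / c))
        (Ioi 0) := (((int_rho hμ (k+1)).1.div_const c)).neg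
    have heq : (fun t : ℝ => -((1 - (1 - Real.exp (-μ * t)) ^ (k+1)) / c)) = g1 := by
      funext t; rw [hg1]; ring
    rwa [heq] at h
  have hg2int := int_t_ck_integrable hμ k
  have htend : Tendsto f atTop (nhds 0) := by
    have hbd : ∀ᶠ t in atTop, ‖f t‖ ≤ (t * Real.exp (-μ * t)) / μ := by
      filter_upwards [eventually_ge_atTop (0:ℝ)] with t ht
      have he1 : Real.exp (-μ * t) ≤ 1 := exp_le_one_of hμ ht
      have he0 : (0:ℝ) ≤ Real.exp (-μ * t) := (Real.exp_pos _).le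
      have hb := one_sub_pow_le k he0 he1
      have hpow0 : (0:ℝ) ≤ 1 - Real.exp (-μ * t) := by linarith
      have hpow1 : (1 - Real.exp (-μ * t)) ^ (k+1) ≤ 1 := pow_le_one₀ hpow0 (by linarith)
      have hnn : 0 ≤ 1 - (1 - Real.exp (-μ * t)) ^ (k+1) := by linarith
      have hcpos : (0:ℝ) < c := by rw [hc]; positivity
      have hnonpos : t * (((1 - Real.exp (-μ * t)) ^ (k+1) - 1) / c) ≤ 0 := by
        apply mul_nonpos_of_nonneg_of_nonpos ht
        apply div_nonpos_of_nonpos_of_nonneg (by linarith) hcpos.le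
      have : ‖f t‖ = t * ((1 - (1 - Real.exp (-μ * t)) ^ (k+1)) / c) := by
        rw [hf, hg1]
        simp only [Real.norm_eq_abs]
        rw [abs_of_nonpos hnonpos]
        ring
      rw [this]
      rw [hc]
      calc t * ((1 - (1 - Real.exp (-μ * t)) ^ (k+1)) / (((k:ℝ)+1) * μ))
          ≤ t * ((((k:ℝ)+1) * Real.exp (-μ * t)) / (((k:ℝ)+1) * μ)) := by
            gcongr
        _ = (t * Real.exp (-μ * t)) / μ := by field_simp
    have hlim : Tendsto (fun t : ℝ => (t * Real.exp (-μ * t)) / μ) atTop (nhds 0) := by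
      have := (tendsto_t_exp hμ).div_const μ
      rwa [zero_div] at this
    exact squeeze_zero_norm' hbd hlim
  have hint : IntegrableOn (fun x => g1 x + g2 x) (Ioi 0) := hg1int.add hg2int
  have hval := integral_Ioi_of_hasDerivAt_of_tendsto' hderiv hint htend
  rw [integral_add hg1int hg2int] at hval
  have hI1 : ∫ t in Ioi 0, g1 t = -(Hsum (k+1) / μ) / c := by
    have heq : g1 = fun t : ℝ => -((1 - (1 - Real.exp (-μ * t)) ^ (k+1)) / c) := by
      funext t; rw [hg1]; ring
    rw [heq, integral_neg, integral_div, (int_rho hμ (k+1)).2]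
    ring
  rw [hI1] at hval
  have hf0 : f 0 = 0 := by simp [hf]
  rw [hf0, sub_zero] at hval
  have : ∫ t in Ioi 0, g2 t = Hsum (k+1) / μ / c := by linear_combination hval
  rw [hg2] at this
  rw [this, hc, div_div]
  congr 1
  ring

lemma int_t_rho (hμ : 0 < μ) (n : ℕ) :
    IntegrableOn (fun t : ℝ => t * (1 - (1 - Real.exp (-μ * t)) ^ n)) (Ioi 0) ∧
    ∫ t in Ioi 0, t * (1 - (1 - Real.exp (-μ * t)) ^ n)
      = (∑ k ∈ Finset.range n, Hsum (k+1) / (((k:ℝ)+1))) / μ^2 := by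
  have hfun : (fun t : ℝ => t * (1 - (1 - Real.exp (-μ * t)) ^ n))
      = fun t => ∑ k ∈ Finset.range n,
          t * (Real.exp (-μ * t) * (1 - Real.exp (-μ * t)) ^ k) := by
    funext t
    rw [hpt n t, Finset.mul_sum]
  constructor
  · rw [hfun]
    exact integrable_finset_sum _ (fun k _ => int_t_ck_integrable hμ k)
  · rw [hfun, integral_finset_sum _ (fun k _ => int_t_ck_integrable hμ k)]
    rw [Finset.sum_div]
    apply Finset.sum_congr rfl
    intro k _
    rw [int_t_ck hμ k]
    have hk : ((k:ℝ)+1) ≠ 0 := by positivity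
    have hμ0 : μ ≠ 0 := ne_of_gt hμ
    field_simp

lemma sum_H_identity (n : ℕ) :
    ∑ k ∈ Finset.range n, Hsum (k+1) / (((k:ℝ)+1))
      = ((Hsum n)^2 + ∑ k ∈ Finset.range n, 1 / ((k:ℝ)+1)^2) / 2 := by
  induction n with
  | zero => simp [Hsum]
  | succ m ih =>
    rw [Finset.sum_range_succ, ih, Finset.sum_range_succ (fun k => 1 / ((k:ℝ)+1)^2)]
    have hHs : Hsum (m+1) = Hsum m + 1/((m:ℝ)+1) := by
      rw [Hsum, Hsum, Finset.sum_range_succ]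
    rw [hHs]
    have hm : ((m:ℝ)+1) ≠ 0 := by positivity
    field_simp
    ring


lemma Hsum_pos {B : ℕ} (hB : 1 ≤ B) : 0 < Hsum B := by
  rw [Hsum]
  apply Finset.sum_pos (fun k _ => by positivity) ⟨0, Finset.mem_range.mpr hB⟩


set_option maxHeartbeats 1000000 in
/-- If `T 0, …, T (B-1)` are i.i.d. shifted-exponential SExp(Δ', μ) random variables and
`M = max_i T i`, then the coefficient of variations of the job compute time satisfies
`√(Var[M]) / E[M] = √(H_{B,2}) / (Δ'μ + H_{B,1})`. -/
theorem cov_max_shifted_exponential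
    {Ω : Type*} [MeasureSpace Ω] [IsProbabilityMeasure (ℙ : Measure Ω)]
    (Δ' μ : ℝ) (hΔ' : 0 ≤ Δ') (hμ : 0 < μ) (B : ℕ) (hB : 1 ≤ B)
    (T : Fin B → Ω → ℝ) (hmeas : ∀ i, Measurable (T i))
    (hindep : iIndepFun T ℙ)
    (hcdf : ∀ i t, ℙ {ω | T i ω ≤ t} =
      ENNReal.ofReal (if t < Δ' then 0 else 1 - Real.exp (-μ * (t - Δ')))) :
    Real.sqrt (variance (fun ω => Finset.univ.sup' ⟨⟨0, hB⟩, Finset.mem_univ _⟩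
        fun i => T i ω) ℙ)
      / (∫ ω, Finset.univ.sup' ⟨⟨0, hB⟩, Finset.mem_univ _⟩ fun i => T i ω)
    = Real.sqrt (∑ k ∈ Finset.range B, (1 : ℝ) / ((k : ℝ) + 1) ^ 2)
      / (Δ' * μ + ∑ k ∈ Finset.range B, (1 : ℝ) / ((k : ℝ) + 1)) := by
  have hμ0 : μ ≠ 0 := ne_of_gt hμ
  set H2 : ℝ := ∑ k ∈ Finset.range B, (1 : ℝ) / ((k : ℝ) + 1) ^ 2 with hH2def
  have hH2nn : 0 ≤ H2 := Finset.sum_nonneg fun k _ => by positivity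
  set M : Ω → ℝ := fun ω => Finset.univ.sup' ⟨⟨0, hB⟩, Finset.mem_univ _⟩
        fun i => T i ω with hMdef
  have hMmeas : Measurable M := by
    have h := Finset.measurable_sup' (f := T)
      (⟨⟨0, hB⟩, Finset.mem_univ _⟩ : (Finset.univ : Finset (Fin B)).Nonempty)
      (fun i _ => hmeas i)
    have he : M = Finset.univ.sup' ⟨⟨0, hB⟩, Finset.mem_univ _⟩ T := by
      funext ω; rw [hMdef]; exact (Finset.sup'_apply _ T ω).symm
    rwa [he]
  set F : ℝ → ℝ := fun s => if s < Δ' then 0 else 1 - Real.exp (-μ * (s - Δ')) with hFdef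
  have hF01 : ∀ s, 0 ≤ F s ∧ F s ≤ 1 := by
    intro s
    rw [hFdef]
    by_cases h : s < Δ'
    · simp [h]
    · simp only [h, if_false]
      have h1 : -μ * (s - Δ') ≤ 0 := by push_neg at h; nlinarith
      have h2 : Real.exp (-μ * (s - Δ')) ≤ 1 := Real.exp_le_one_iff.mpr h1
      have h3 : 0 < Real.exp (-μ * (s - Δ')) := Real.exp_pos _
      constructor <;> linarith
  have hMcdf : ∀ s, ℙ {ω | M ω ≤ s} = ENNReal.ofReal ((F s) ^ B) := by
    intro s
    have hset : {ω | M ω ≤ s} = ⋂ i, T i ⁻¹' Set.Iic s := by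
      ext ω
      simp [hMdef, Finset.sup'_le_iff]
      exact ⟨fun h i => le_trans (Finset.le_sup' (fun i => T i ω) (Finset.mem_univ i)) h,
        fun h => Finset.sup'_le _ _ (fun i _ => h i)⟩
    rw [hset, hindep.meas_iInter (fun i => ⟨Set.Iic s, measurableSet_Iic, rfl⟩)]
    have hone : ∀ i : Fin B, ℙ (T i ⁻¹' Set.Iic s) = ENNReal.ofReal (F s) :=
      fun i => hcdf i s
    rw [Finset.prod_congr rfl (fun i _ => hone i), Finset.prod_const, Finset.card_univ,
      Fintype.card_fin, ← ENNReal.ofReal_pow (hF01 s).1]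
  have hae : ∀ᵐ ω ∂ℙ, Δ' ≤ M ω := by
    rw [ae_iff]
    have hsub : {ω | ¬ Δ' ≤ M ω} ⊆ ⋃ n : ℕ, {ω | M ω ≤ Δ' - 1 / ((n : ℝ) + 1)} := by
      intro ω hω
      simp only [Set.mem_setOf_eq, not_le] at hω
      obtain ⟨n, hn⟩ := exists_nat_one_div_lt (sub_pos.mpr hω)
      exact Set.mem_iUnion.mpr ⟨n, by simp only [Set.mem_setOf_eq]; linarith⟩
    refine measure_mono_null hsub (measure_iUnion_null fun n => ?_)
    rw [hMcdf]
    have h1 : Δ' - 1 / ((n : ℝ) + 1) < Δ' := by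
      have : (0:ℝ) < 1 / ((n : ℝ) + 1) := by positivity
      linarith
    rw [hFdef]
    simp only [h1, if_true]
    rw [zero_pow (by omega : B ≠ 0)]
    simp
  set Y : Ω → ℝ := fun ω => max (M ω - Δ') 0 with hYdef
  have hYmeas : Measurable Y := (hMmeas.sub measurable_const).max measurable_const
  have hY0 : ∀ ω, 0 ≤ Y ω := fun ω => le_max_right _ _
  have hMY : M =ᵐ[ℙ] fun ω => Y ω + Δ' := by
    filter_upwards [hae] with ω h
    rw [hYdef]
    simp only
    rw [max_eq_left (by linarith)]
    ring
  have htail : ∀ t : ℝ, t ∈ Set.Ioi (0:ℝ) →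
      ℙ {a | t < Y a} = ENNReal.ofReal (1 - (1 - Real.exp (-μ * t)) ^ B) := by
    intro t ht
    have ht0 : (0:ℝ) < t := ht
    have hset : {a | t < Y a} = {ω | M ω ≤ Δ' + t}ᶜ := by
      ext ω
      simp only [Set.mem_setOf_eq, Set.mem_compl_iff, not_le, hYdef]
      constructor
      · intro h
        rcases lt_max_iff.mp h with h | h
        · linarith
        · linarith
      · intro h
        exact lt_max_iff.mpr (Or.inl (by linarith))
    have hFt : F (Δ' + t) = 1 - Real.exp (-μ * t) := by
      rw [hFdef]
      have : ¬ (Δ' + t < Δ') := by linarith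
      simp only [this, if_false]
      congr 2
      ring
    have hx0 : 0 ≤ (1 - Real.exp (-μ * t)) ^ B := by
      have := exp_le_one_of hμ ht0.le
      exact pow_nonneg (by linarith) B
    rw [hset, measure_compl (measurableSet_le hMmeas measurable_const) (measure_ne_top _ _),
      hMcdf, measure_univ, hFt, ← ENNReal.ofReal_one, ← ENNReal.ofReal_sub _ hx0]
  have hrho_nn : ∀ t ∈ Set.Ioi (0:ℝ), 0 ≤ 1 - (1 - Real.exp (-μ * t)) ^ B := by
    intro t ht
    have ht0 : (0:ℝ) < t := ht
    have he1 := exp_le_one_of hμ ht0.le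
    have he0 := (Real.exp_pos (-μ * t)).le
    have : (1 - Real.exp (-μ * t)) ^ B ≤ 1 := pow_le_one₀ (by linarith) (by linarith)
    linarith
  -- first moment
  have hEY_lint : ∫⁻ ω, ENNReal.ofReal (Y ω) ∂ℙ = ENNReal.ofReal (Hsum B / μ) := by
    rw [lintegral_eq_lintegral_meas_lt ℙ (ae_of_all _ hY0) hYmeas.aemeasurable]
    rw [setLIntegral_congr_fun measurableSet_Ioi htail]
    rw [← ofReal_integral_eq_lintegral_ofReal (int_rho hμ B).1
      ((ae_restrict_mem measurableSet_Ioi).mono hrho_nn)]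
    rw [(int_rho hμ B).2]
  have hHB_pos := Hsum_pos hB
  have hYint : Integrable Y ℙ :=
    ⟨hYmeas.aestronglyMeasurable, by
      rw [hasFiniteIntegral_iff_ofReal (ae_of_all _ hY0), hEY_lint]
      exact ENNReal.ofReal_lt_top⟩
  have hEY : ∫ ω, Y ω ∂ℙ = Hsum B / μ := by
    rw [integral_eq_lintegral_of_nonneg_ae (ae_of_all _ hY0) hYmeas.aestronglyMeasurable,
      hEY_lint, ENNReal.toReal_ofReal (div_nonneg hHB_pos.le hμ.le)]
  -- second moment
  have hEY2_lint : ∫⁻ ω, ENNReal.ofReal (Y ω ^ 2) ∂ℙ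
      = ENNReal.ofReal (((Hsum B) ^ 2 + H2) / μ ^ 2) := by
    have hlc := lintegral_comp_eq_lintegral_meas_lt_mul ℙ (f := Y) (g := fun t => 2 * t)
      (ae_of_all _ hY0) hYmeas.aemeasurable
      (fun t _ => (continuous_const.mul continuous_id).intervalIntegrable 0 t)
      ((ae_restrict_mem measurableSet_Ioi).mono fun t ht => by
        have h : (0:ℝ) < t := ht
        show (0:ℝ) ≤ 2 * t
        linarith)
    have hL : ∀ ω, ENNReal.ofReal (∫ t in (0:ℝ)..Y ω, 2 * t) = ENNReal.ofReal (Y ω ^ 2) := by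
      intro ω
      congr 1
      rw [intervalIntegral.integral_const_mul, integral_id]
      ring
    rw [lintegral_congr hL] at hlc
    rw [hlc]
    rw [setLIntegral_congr_fun measurableSet_Ioi (fun t ht => by
      rw [htail t ht, ← ENNReal.ofReal_mul (hrho_nn t ht)])]
    have hint2 : IntegrableOn
        (fun t : ℝ => (1 - (1 - Real.exp (-μ * t)) ^ B) * (2 * t)) (Set.Ioi 0) := by
      have h := (int_t_rho hμ B).1.const_mul 2
      exact IntegrableOn.congr_fun h (fun t _ => by ring) measurableSet_Ioi
    rw [← ofReal_integral_eq_lintegral_ofReal hint2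
      ((ae_restrict_mem measurableSet_Ioi).mono fun t ht => by
        have h1 := hrho_nn t ht
        have : (0:ℝ) < t := ht
        positivity)]
    congr 1
    have heq : ∫ t in Set.Ioi (0:ℝ), (1 - (1 - Real.exp (-μ * t)) ^ B) * (2 * t)
        = 2 * ∫ t in Set.Ioi (0:ℝ), t * (1 - (1 - Real.exp (-μ * t)) ^ B) := by
      rw [← integral_const_mul]
      apply setIntegral_congr_fun measurableSet_Ioi
      intro t _
      ring
    rw [heq, (int_t_rho hμ B).2, sum_H_identity B]
    rw [hH2def, Hsum]
    field_simp
  have hYsqint : Integrable (fun ω => Y ω ^ 2) ℙ :=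
    ⟨(hYmeas.pow_const 2).aestronglyMeasurable, by
      rw [hasFiniteIntegral_iff_ofReal (ae_of_all _ fun ω => sq_nonneg _), hEY2_lint]
      exact ENNReal.ofReal_lt_top⟩
  have hEY2 : ∫ ω, Y ω ^ 2 ∂ℙ = ((Hsum B) ^ 2 + H2) / μ ^ 2 := by
    rw [integral_eq_lintegral_of_nonneg_ae (ae_of_all _ fun ω => sq_nonneg _)
      (hYmeas.pow_const 2).aestronglyMeasurable, hEY2_lint,
      ENNReal.toReal_ofReal (by positivity)]
  -- Memℒp and variance
  have hYL2 : MemLp Y 2 ℙ :=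
    (memLp_two_iff_integrable_sq hYmeas.aestronglyMeasurable).mpr hYsqint
  have hML2 : MemLp M 2 ℙ := by
    have h : MemLp (fun ω => Y ω + Δ') 2 ℙ := hYL2.add (memLp_const Δ')
    exact h.ae_eq hMY.symm
  have hEM : ∫ ω, M ω ∂ℙ = Hsum B / μ + Δ' := by
    rw [integral_congr_ae hMY, integral_add hYint (integrable_const _), hEY,
      integral_const, probReal_univ]
    simp only [ENNReal.toReal_one, one_smul]
  have hEM2 : ∫ ω, M ω ^ 2 ∂ℙ
      = ((Hsum B) ^ 2 + H2) / μ ^ 2 + 2 * Δ' * (Hsum B / μ) + Δ' ^ 2 := by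
    have h1 : (fun ω => M ω ^ 2) =ᵐ[ℙ] fun ω => Y ω ^ 2 + (2 * Δ') * Y ω + Δ' ^ 2 := by
      filter_upwards [hMY] with ω h
      have h' : M ω = Y ω + Δ' := h
      rw [h']
      ring
    have hsum_int : Integrable (fun ω => Y ω ^ 2 + (2 * Δ') * Y ω) ℙ :=
      hYsqint.add (hYint.const_mul _)
    rw [integral_congr_ae h1,
      integral_add hsum_int (integrable_const _),
      integral_add hYsqint (hYint.const_mul _), integral_const_mul, hEY2, hEY,
      integral_const, probReal_univ]
    simp only [smul_eq_mul, ENNReal.toReal_one, one_mul]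
  have hvar : variance M ℙ = H2 / μ ^ 2 := by
    rw [variance_eq_sub hML2]
    have hsq : (∫ ω, (M ^ 2) ω ∂ℙ) = ∫ ω, M ω ^ 2 ∂ℙ := by
      apply integral_congr_ae
      filter_upwards with ω
      simp [Pi.pow_apply]
    rw [hsq, hEM2, hEM]
    field_simp
    ring
  rw [hvar, hEM]
  have hsqrt : Real.sqrt (H2 / μ ^ 2) = Real.sqrt H2 / μ := by
    rw [show H2 / μ ^ 2 = (Real.sqrt H2 / μ) ^ 2 by
      rw [div_pow, Real.sq_sqrt hH2nn], Real.sqrt_sq (by positivity)]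
  rw [hsqrt]
  have hden : Hsum B / μ + Δ' = (Δ' * μ + Hsum B) / μ := by
    field_simp
    ring
  rw [hden]
  have hden0 : Δ' * μ + Hsum B ≠ 0 := by positivity
  rw [div_div_div_cancel_right₀]
  · rw [Hsum]
  · exact hμ0
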